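/- Let n = m + k, g : ℝ^n → Sym(n,ℝ) a C¹ field of symmetric matrices, α_ν : ℝ^n × ℝ^m → ℝ C² functions (ν = 1,…,k), and define T(q, w) = (1/2) Σ_{i,j=1}^n g_{i,j}(q) w_i w_j and T*(q,u) = T(q, u, α(q,u)). Along any C² curve (q(t), u(t)) with q̇_j = u_j (j ≤ m) and q̇_{m+σ} = α_σ(q,u), the combination d/dt(∂T*/∂u_i) − ∂T*/∂q_i − Σ_{ν=1}^k (∂T*/∂q_{m+ν})(∂α_ν/∂u_i) − Σ_{ν=1}^k (∂T/∂q̇_{m+ν})|_{q̇=(u,α)} · B_i^ν equals d/dt(∂T/∂q̇_i) − ∂T/∂q_i + Σ_{ν=1}^k (∂α_ν/∂u_i)( d/dt(∂T/∂q̇_{m+ν}) − ∂T/∂q_{m+ν} ), all derivatives of T evaluated along q̇ = (u, α(q,u)); here B_i^ν = Σ_{r=1}^m (∂²α_ν/∂u_i∂q_r u_r + ∂²α_ν/∂u_i∂u_r u̇_r) − ∂α_ν/∂q_i + Σ_{σ=1}^k (∂²α_ν/∂u_i∂q_{m+σ} α_σ − (∂α_σ/∂u_i)(∂α_ν/∂q_{m+σ})).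 -/

import Mathlib

namespace Stmt12

variable {m k : ℕ}

private lemma sum_single {ι : Type*} [Fintype ι] [DecidableEq ι] (w : ι → ℝ) :
    ∑ r : ι, w r • (Pi.single r (1:ℝ) : ι → ℝ) = w := by
  funext x
  simp [Finset.sum_apply, Pi.single_apply]

private lemma vec_decomp (w : Fin (m+k) → ℝ) :
    w = (∑ r : Fin m, w (Fin.castAdd k r) • (Pi.single (Fin.castAdd k r) (1:ℝ) : Fin (m+k) → ℝ)) +
        ∑ σ : Fin k, w (Fin.natAdd m σ) • (Pi.single (Fin.natAdd m σ) (1:ℝ) : Fin (m+k) → ℝ) := by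
  conv_lhs => rw [← sum_single w]
  rw [Fin.sum_univ_add]

private lemma append_single (i : Fin m) :
    Fin.append (Pi.single i (1:ℝ)) (0 : Fin k → ℝ) = (Pi.single (Fin.castAdd k i) (1:ℝ) : Fin (m+k) → ℝ) := by
  funext j
  induction j using Fin.addCases with
  | left l => simp [Fin.append_left, Pi.single_apply, Fin.ext_iff]
  | right l =>
    have hi := i.isLt
    have hne : Fin.natAdd m l ≠ Fin.castAdd k i := by
      simp only [ne_eq, Fin.ext_iff, Fin.coe_natAdd, Fin.coe_castAdd]
      omega
    rw [Fin.append_right, Pi.single_eq_of_ne hne]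
    simp

private lemma append_zero_left (c : Fin k → ℝ) :
    (Fin.append (0 : Fin m → ℝ) c : Fin (m+k) → ℝ)
      = ∑ σ : Fin k, c σ • (Pi.single (Fin.natAdd m σ) (1:ℝ) : Fin (m+k) → ℝ) := by
  have h := vec_decomp (m := m) (k := k) (Fin.append 0 c)
  simpa [Fin.append_left, Fin.append_right] using h

private lemma append_split (x : Fin m → ℝ) (c : Fin k → ℝ) :
    (Fin.append x c : Fin (m+k) → ℝ)
      = Fin.append x 0 + ∑ σ : Fin k, c σ • (Pi.single (Fin.natAdd m σ) (1:ℝ) : Fin (m+k) → ℝ) := by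
  rw [← append_zero_left]
  funext j
  induction j using Fin.addCases with
  | left l => simp [Fin.append_left]
  | right l => simp [Fin.append_right]

private lemma pair_decomp (w : Fin (m+k) → ℝ) (y : Fin m → ℝ) :
    ((w, y) : (Fin (m+k) → ℝ) × (Fin m → ℝ)) =
      (∑ r : Fin m, w (Fin.castAdd k r) •
        (((Pi.single (Fin.castAdd k r) (1:ℝ) : Fin (m+k) → ℝ), (0 : Fin m → ℝ)) : (Fin (m+k) → ℝ) × (Fin m → ℝ)))
      + (∑ σ : Fin k, w (Fin.natAdd m σ) •
        (((Pi.single (Fin.natAdd m σ) (1:ℝ) : Fin (m+k) → ℝ), (0 : Fin m → ℝ)) : (Fin (m+k) → ℝ) × (Fin m → ℝ)))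
      + ∑ r : Fin m, y r • (((0 : Fin (m+k) → ℝ), (Pi.single r (1:ℝ) : Fin m → ℝ)) : (Fin (m+k) → ℝ) × (Fin m → ℝ)) := by
  refine Prod.ext ?_ ?_
  · simp only [Prod.fst_add, Prod.fst_sum, Prod.smul_fst, smul_zero, Finset.sum_const_zero,
      add_zero]
    exact vec_decomp w
  · simp only [Prod.snd_add, Prod.snd_sum, Prod.smul_snd, smul_zero, Finset.sum_const_zero,
      zero_add]
    exact (sum_single y).symm

private lemma clm_expand (M : ((Fin (m+k) → ℝ) × (Fin m → ℝ)) →L[ℝ] ℝ)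
    (w : Fin (m+k) → ℝ) (y : Fin m → ℝ) :
    M (w, y) = (∑ r : Fin m, w (Fin.castAdd k r) * M ((Pi.single (Fin.castAdd k r) (1:ℝ) : Fin (m+k) → ℝ), 0))
      + (∑ σ : Fin k, w (Fin.natAdd m σ) * M ((Pi.single (Fin.natAdd m σ) (1:ℝ) : Fin (m+k) → ℝ), 0))
      + ∑ r : Fin m, y r * M (0, (Pi.single r (1:ℝ) : Fin m → ℝ)) := by
  have key1 : ∀ (a:ℝ) (v : Fin (m+k) → ℝ), M (a • v, (0 : Fin m → ℝ)) = a * M (v, 0) := by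
    intro a v
    rw [show ((a • v, (0 : Fin m → ℝ)) : _) = a • ((v, 0) : (Fin (m+k) → ℝ) × (Fin m → ℝ)) by
      simp [Prod.smul_mk], map_smul, smul_eq_mul]
  have key2 : ∀ (a:ℝ) (v : Fin m → ℝ), M ((0 : Fin (m+k) → ℝ), a • v) = a * M (0, v) := by
    intro a v
    rw [show (((0 : Fin (m+k) → ℝ), a • v) : _) = a • (((0 : Fin (m+k) → ℝ), v) : _) by
      simp [Prod.smul_mk], map_smul, smul_eq_mul]
  conv_lhs => rw [pair_decomp w y]
  simp [key1, key2]

private lemma dir_expand (M : ((Fin (m+k) → ℝ) × (Fin (m+k) → ℝ)) →L[ℝ] ℝ)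
    (h : Fin (m+k) → ℝ) (x : Fin m → ℝ) (c : Fin k → ℝ) :
    M (h, Fin.append x c)
      = M (h, Fin.append x 0)
        + ∑ σ : Fin k, c σ * M (0, (Pi.single (Fin.natAdd m σ) (1:ℝ) : Fin (m+k) → ℝ)) := by
  have h1 : ((h, Fin.append x c) : (Fin (m+k) → ℝ) × (Fin (m+k) → ℝ))
      = (h, Fin.append x 0) + ∑ σ : Fin k, c σ • (((0 : Fin (m+k) → ℝ),
          (Pi.single (Fin.natAdd m σ) (1:ℝ) : Fin (m+k) → ℝ)) : (Fin (m+k) → ℝ) × (Fin (m+k) → ℝ)) := by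
    refine Prod.ext ?_ ?_
    · simp [Prod.fst_sum]
    · simp only [Prod.snd_add, Prod.snd_sum, Prod.smul_snd]
      exact append_split x c
  have key2 : ∀ (a:ℝ) (v : Fin (m+k) → ℝ), M ((0 : Fin (m+k) → ℝ), a • v) = a * M (0, v) := by
    intro a v
    rw [show (((0 : Fin (m+k) → ℝ), a • v) : _) = a • (((0 : Fin (m+k) → ℝ), v) : _) by
      simp [Prod.smul_mk], map_smul, smul_eq_mul]
  rw [h1, map_add, map_sum]
  simp [key2]

variable (g : (Fin (m + k) → ℝ) → Matrix (Fin (m + k)) (Fin (m + k)) ℝ)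

noncomputable def Fe (e : Fin (m+k) → ℝ) (p : (Fin (m+k) → ℝ) × (Fin (m+k) → ℝ)) : ℝ :=
  (1/2) * ∑ i : Fin (m+k), ∑ j : Fin (m+k), g p.1 i j * (e i * p.2 j + p.2 i * e j)

lemma snd_apply_contDiff (i : Fin (m+k)) :
    ContDiff ℝ 1 (fun p : (Fin (m+k) → ℝ) × (Fin (m+k) → ℝ) => p.2 i) :=
  (ContinuousLinearMap.contDiff
    ((ContinuousLinearMap.proj i).comp (ContinuousLinearMap.snd ℝ (Fin (m+k) → ℝ) (Fin (m+k) → ℝ))))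

lemma T_contDiff (hg : ∀ i j, ContDiff ℝ 1 (fun z => g z i j)) :
    ContDiff ℝ 1 (fun p : (Fin (m+k) → ℝ) × (Fin (m+k) → ℝ) =>
      (1/2 : ℝ) * ∑ i : Fin (m+k), ∑ j : Fin (m+k), g p.1 i j * p.2 i * p.2 j) := by
  refine contDiff_const.mul (ContDiff.sum fun i _ => ContDiff.sum fun j _ => ?_)
  exact (((hg i j).comp contDiff_fst).mul (snd_apply_contDiff i)).mul (snd_apply_contDiff j)

lemma Fe_contDiff (hg : ∀ i j, ContDiff ℝ 1 (fun z => g z i j)) (e : Fin (m+k) → ℝ) :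
    ContDiff ℝ 1 (Fe g e) := by
  refine contDiff_const.mul (ContDiff.sum fun i _ => ContDiff.sum fun j _ => ?_)
  refine ((hg i j).comp contDiff_fst).mul ?_
  exact ((contDiff_const.mul (snd_apply_contDiff j)).add ((snd_apply_contDiff i).mul contDiff_const))

lemma fderiv_T_dir (hg : ∀ i j, ContDiff ℝ 1 (fun z => g z i j))
    (p : (Fin (m+k) → ℝ) × (Fin (m+k) → ℝ)) (e : Fin (m+k) → ℝ) :
    fderiv ℝ (fun p : (Fin (m+k) → ℝ) × (Fin (m+k) → ℝ) =>
        (1/2 : ℝ) * ∑ i : Fin (m+k), ∑ j : Fin (m+k), g p.1 i j * p.2 i * p.2 j) p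
      ((0 : Fin (m+k) → ℝ), e) = Fe g e p := by
  have hd : DifferentiableAt ℝ (fun p : (Fin (m+k) → ℝ) × (Fin (m+k) → ℝ) =>
      (1/2 : ℝ) * ∑ i : Fin (m+k), ∑ j : Fin (m+k), g p.1 i j * p.2 i * p.2 j) p :=
    ((T_contDiff g hg).differentiable one_ne_zero) p
  have hline : HasDerivAt (fun s : ℝ => p + s • ((0 : Fin (m+k) → ℝ), e))
      ((0 : Fin (m+k) → ℝ), e) (0:ℝ) := by
    simpa using ((hasDerivAt_id (0:ℝ)).smul_const ((0 : Fin (m+k) → ℝ), e)).const_add p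
  have hd' : HasFDerivAt (fun p : (Fin (m+k) → ℝ) × (Fin (m+k) → ℝ) =>
      (1/2 : ℝ) * ∑ i : Fin (m+k), ∑ j : Fin (m+k), g p.1 i j * p.2 i * p.2 j)
      (fderiv ℝ (fun p : (Fin (m+k) → ℝ) × (Fin (m+k) → ℝ) =>
        (1/2 : ℝ) * ∑ i : Fin (m+k), ∑ j : Fin (m+k), g p.1 i j * p.2 i * p.2 j) p)
      ((fun s : ℝ => p + s • ((0 : Fin (m+k) → ℝ), e)) 0) := by
    simpa using hd.hasFDerivAt
  have h2 := hd'.comp_hasDerivAt (0:ℝ) hline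
  have hfun : (fun s : ℝ => (fun p : (Fin (m+k) → ℝ) × (Fin (m+k) → ℝ) =>
        (1/2 : ℝ) * ∑ i : Fin (m+k), ∑ j : Fin (m+k), g p.1 i j * p.2 i * p.2 j)
          (p + s • ((0 : Fin (m+k) → ℝ), e)))
      = fun s => (1/2 : ℝ) * ∑ i : Fin (m+k), ∑ j : Fin (m+k),
          g p.1 i j * (p.2 i + s * e i) * (p.2 j + s * e j) := by
    funext s
    simp [Prod.smul_mk, smul_eq_mul]
  have h3 : HasDerivAt (fun s : ℝ => (1/2 : ℝ) * ∑ i : Fin (m+k), ∑ j : Fin (m+k),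
        g p.1 i j * (p.2 i + s * e i) * (p.2 j + s * e j))
      ((1/2 : ℝ) * ∑ i : Fin (m+k), ∑ j : Fin (m+k),
        (g p.1 i j * e i * (p.2 j + 0 * e j) + g p.1 i j * (p.2 i + 0 * e i) * e j)) (0:ℝ) := by
    refine HasDerivAt.const_mul _ (HasDerivAt.fun_sum fun i _ => HasDerivAt.fun_sum fun j _ => ?_)
    have hA : HasDerivAt (fun s : ℝ => p.2 i + s * e i) (e i) (0:ℝ) := by
      simpa using ((hasDerivAt_id (0:ℝ)).mul_const (e i)).const_add (p.2 i)
    have hB : HasDerivAt (fun s : ℝ => p.2 j + s * e j) (e j) (0:ℝ) := by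
      simpa using ((hasDerivAt_id (0:ℝ)).mul_const (e j)).const_add (p.2 j)
    have := (hA.const_mul (g p.1 i j)).mul hB
    exact this
  rw [show ((fun p : (Fin (m+k) → ℝ) × (Fin (m+k) → ℝ) =>
        (1/2 : ℝ) * ∑ i : Fin (m+k), ∑ j : Fin (m+k), g p.1 i j * p.2 i * p.2 j) ∘
        (fun s : ℝ => p + s • ((0 : Fin (m+k) → ℝ), e)))
      = fun s => (1/2 : ℝ) * ∑ i : Fin (m+k), ∑ j : Fin (m+k),
          g p.1 i j * (p.2 i + s * e i) * (p.2 j + s * e j) from hfun] at h2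
  have := h2.unique h3
  rw [this, Fe]
  congr 1
  refine Finset.sum_congr rfl fun i _ => Finset.sum_congr rfl fun j _ => ?_
  ring

variable (α : Fin k → (Fin (m + k) → ℝ) × (Fin m → ℝ) → ℝ)

noncomputable def Lv (p : (Fin (m+k) → ℝ) × (Fin m → ℝ)) :
    ((Fin (m+k) → ℝ) × (Fin m → ℝ)) →L[ℝ] (Fin (m+k) → ℝ) :=
  ContinuousLinearMap.pi (fun j => Fin.addCases
    (motive := fun _ => ((Fin (m+k) → ℝ) × (Fin m → ℝ)) →L[ℝ] ℝ)
    (fun r => (ContinuousLinearMap.proj r).comp (ContinuousLinearMap.snd ℝ (Fin (m+k) → ℝ) (Fin m → ℝ)))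
    (fun σ => fderiv ℝ (α σ) p) j)

lemma hasFDerivAt_Phi (hα : ∀ ν, ContDiff ℝ 2 (α ν)) (p : (Fin (m+k) → ℝ) × (Fin m → ℝ)) :
    HasFDerivAt (fun p : (Fin (m+k) → ℝ) × (Fin m → ℝ) =>
        (p.1, Fin.append p.2 (fun ν => α ν p)))
      ((ContinuousLinearMap.fst ℝ (Fin (m+k) → ℝ) (Fin m → ℝ)).prod (Lv α p)) p := by
  refine HasFDerivAt.prodMk (ContinuousLinearMap.fst ℝ (Fin (m+k) → ℝ) (Fin m → ℝ)).hasFDerivAt ?_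
  · rw [hasFDerivAt_pi']
    intro j
    rw [Lv, ContinuousLinearMap.proj_pi]
    induction j using Fin.addCases with
    | left r =>
      rw [Fin.addCases_left]
      have hf : (fun p : (Fin (m+k) → ℝ) × (Fin m → ℝ) =>
          Fin.append p.2 (fun ν => α ν p) (Fin.castAdd k r)) = fun p => p.2 r := by
        funext p; rw [Fin.append_left]
      rw [hf]
      exact ((ContinuousLinearMap.proj r).comp
        (ContinuousLinearMap.snd ℝ (Fin (m+k) → ℝ) (Fin m → ℝ))).hasFDerivAt
    | right σ =>
      rw [Fin.addCases_right]
      have hf : (fun p : (Fin (m+k) → ℝ) × (Fin m → ℝ) =>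
          Fin.append p.2 (fun ν => α ν p) (Fin.natAdd m σ)) = α σ := by
        funext p; rw [Fin.append_right]
      rw [hf]
      exact (((hα σ).differentiable (by norm_num)) p).hasFDerivAt

lemma fderiv_Tstar_eq {T : (Fin (m+k) → ℝ) × (Fin (m+k) → ℝ) → ℝ}
    (hT1 : ContDiff ℝ 1 T) (hα : ∀ ν, ContDiff ℝ 2 (α ν))
    (p : (Fin (m+k) → ℝ) × (Fin m → ℝ)) (h : (Fin (m+k) → ℝ) × (Fin m → ℝ)) :
    fderiv ℝ (fun p : (Fin (m+k) → ℝ) × (Fin m → ℝ) =>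
        T (p.1, Fin.append p.2 (fun ν => α ν p))) p h
      = fderiv ℝ T (p.1, Fin.append p.2 (fun ν => α ν p))
          (h.1, Fin.append h.2 (fun σ => fderiv ℝ (α σ) p h)) := by
  have hΦ := hasFDerivAt_Phi α hα p
  have hTd : HasFDerivAt T
      (fderiv ℝ T (p.1, Fin.append p.2 (fun ν => α ν p)))
      (p.1, Fin.append p.2 (fun ν => α ν p)) :=
    ((hT1.differentiable one_ne_zero) _).hasFDerivAt
  have hcomp := hTd.comp p hΦ
  have hfe : (fun p : (Fin (m+k) → ℝ) × (Fin m → ℝ) =>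
      T (p.1, Fin.append p.2 (fun ν => α ν p)))
      = T ∘ (fun p : (Fin (m+k) → ℝ) × (Fin m → ℝ) =>
          (p.1, Fin.append p.2 (fun ν => α ν p))) := rfl
  have harg : ((ContinuousLinearMap.fst ℝ (Fin (m+k) → ℝ) (Fin m → ℝ)).prod (Lv α p)) h
      = (h.1, Fin.append h.2 (fun σ => fderiv ℝ (α σ) p h)) := by
    refine Prod.ext rfl ?_
    show Lv α p h = Fin.append h.2 (fun σ => fderiv ℝ (α σ) p h)
    funext j
    rw [Lv, ContinuousLinearMap.pi_apply]
    induction j using Fin.addCases with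
    | left r => rw [Fin.addCases_left, Fin.append_left]; rfl
    | right σ => rw [Fin.addCases_right, Fin.append_right]
  rw [hfe, hcomp.fderiv, ContinuousLinearMap.comp_apply, harg]



private lemma alg1 (X Z uu du : Fin m → ℝ) (Y aa ββ αα : Fin k → ℝ) (c1 : ℝ) :
    (∑ r, uu r * X r) + (∑ σ, αα σ * Y σ) + ∑ r, du r * Z r
      = ((∑ r, (X r * uu r + Z r * du r)) - c1 + ∑ σ, (Y σ * αα σ - aa σ * ββ σ))
        + c1 + ∑ σ, aa σ * ββ σ := by
  simp only [Finset.sum_add_distrib, Finset.sum_sub_distrib]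
  have e1 : ∑ r : Fin m, X r * uu r = ∑ r : Fin m, uu r * X r :=
    Finset.sum_congr rfl fun r _ => mul_comm _ _
  have e2 : ∑ σ : Fin k, Y σ * αα σ = ∑ σ : Fin k, αα σ * Y σ :=
    Finset.sum_congr rfl fun σ _ => mul_comm _ _
  have e3 : ∑ r : Fin m, Z r * du r = ∑ r : Fin m, du r * Z r :=
    Finset.sum_congr rfl fun r _ => mul_comm _ _
  rw [e1, e2, e3]; ring

private lemma alg2 {k : ℕ} (D1 Tq1 : ℝ) (D P a c1 Tq B : Fin k → ℝ) (β : Fin k → Fin k → ℝ) :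
    D1 + (∑ ν, ((B ν + c1 ν + ∑ σ, a σ * β ν σ) * P ν + a ν * D ν))
      - (Tq1 + ∑ σ, c1 σ * P σ)
      - (∑ ν, (Tq ν + ∑ σ, β σ ν * P σ) * a ν)
      - (∑ ν, P ν * B ν)
    = D1 - Tq1 + ∑ ν, a ν * (D ν - Tq ν) := by
  have hswap : ∑ ν, (∑ σ, a σ * β ν σ) * P ν = ∑ ν, (∑ σ, β σ ν * P σ) * a ν := by
    have h1 : ∑ ν, (∑ σ, a σ * β ν σ) * P ν = ∑ ν : Fin k, ∑ σ : Fin k, a σ * β ν σ * P ν := by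
      refine Finset.sum_congr rfl fun ν _ => ?_
      rw [Finset.sum_mul]
    have h2 : ∑ ν, (∑ σ, β σ ν * P σ) * a ν = ∑ ν : Fin k, ∑ σ : Fin k, β σ ν * P σ * a ν := by
      refine Finset.sum_congr rfl fun ν _ => ?_
      rw [Finset.sum_mul]
    rw [h1, h2, Finset.sum_comm]
    exact Finset.sum_congr rfl fun ν _ => Finset.sum_congr rfl fun σ _ => by ring
  simp only [add_mul, mul_sub, mul_add, Finset.sum_add_distrib, Finset.sum_sub_distrib]
  have e1 : ∑ ν, P ν * B ν = ∑ ν, B ν * P ν := Finset.sum_congr rfl fun ν _ => mul_comm _ _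
  have e2 : ∑ ν, a ν * D ν = ∑ ν, a ν * D ν := rfl
  have e3 : ∑ ν, Tq ν * a ν = ∑ ν, a ν * Tq ν := Finset.sum_congr rfl fun ν _ => mul_comm _ _
  linarith [hswap, e1, e3]

private lemma append_zero_zero : (Fin.append (0 : Fin m → ℝ) (0 : Fin k → ℝ) : Fin (m+k) → ℝ) = 0 := by
  funext j
  induction j using Fin.addCases with
  | left l => rw [Fin.append_left]; rfl
  | right l => rw [Fin.append_right]; rfl

end Stmt12


open Stmt12 in
/-- Proposition 3.1 (central identity): along constrained motions, the nonlinear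
Voronec left-hand side (expressed through the reduced kinetic energy `T*` and the
coefficients `B_i^ν`) coincides with the projected Newton left-hand side. -/
theorem stmt_12 (m k : ℕ)
    (g : (Fin (m + k) → ℝ) → Matrix (Fin (m + k)) (Fin (m + k)) ℝ)
    (hg : ∀ i j, ContDiff ℝ 1 (fun z => g z i j)) (hsymm : ∀ z, (g z).IsSymm)
    (α : Fin k → (Fin (m + k) → ℝ) × (Fin m → ℝ) → ℝ) (hα : ∀ ν, ContDiff ℝ 2 (α ν))
    (T : (Fin (m + k) → ℝ) × (Fin (m + k) → ℝ) → ℝ)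
    (hT : T = fun p => (1 / 2) *
      ∑ i : Fin (m + k), ∑ j : Fin (m + k), g p.1 i j * p.2 i * p.2 j)
    (Tstar : (Fin (m + k) → ℝ) × (Fin m → ℝ) → ℝ)
    (hTstar : Tstar = fun p => T (p.1, Fin.append p.2 (fun ν => α ν p)))
    (q : ℝ → Fin (m + k) → ℝ) (u : ℝ → Fin m → ℝ)
    (hq : ContDiff ℝ 2 q) (hu : ContDiff ℝ 1 u)
    (hconstr1 : ∀ (t : ℝ) (j : Fin m), deriv (fun τ => q τ (Fin.castAdd k j)) t = u t j)
    (hconstr2 : ∀ (t : ℝ) (σ : Fin k),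
      deriv (fun τ => q τ (Fin.natAdd m σ)) t = α σ (q t, u t))
    (i : Fin m) (t : ℝ) :
    -- nonlinear Voronec form
    deriv (fun τ =>
        fderiv ℝ Tstar (q τ, u τ) ((0 : Fin (m + k) → ℝ), Pi.single i (1 : ℝ))) t
      - fderiv ℝ Tstar (q t, u t) (Pi.single (Fin.castAdd k i) (1 : ℝ), (0 : Fin m → ℝ))
      - (∑ ν : Fin k,
          fderiv ℝ Tstar (q t, u t) (Pi.single (Fin.natAdd m ν) (1 : ℝ), (0 : Fin m → ℝ))
            * fderiv ℝ (α ν) (q t, u t) ((0 : Fin (m + k) → ℝ), Pi.single i (1 : ℝ)))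
      - (∑ ν : Fin k,
          fderiv ℝ T (q t, Fin.append (u t) (fun ν' => α ν' (q t, u t)))
              ((0 : Fin (m + k) → ℝ), Pi.single (Fin.natAdd m ν) (1 : ℝ))
            * -- B_i^ν :
            ((∑ r : Fin m,
                (fderiv ℝ (fun p => fderiv ℝ (α ν) p ((0 : Fin (m + k) → ℝ), Pi.single i (1 : ℝ)))
                    (q t, u t) (Pi.single (Fin.castAdd k r) (1 : ℝ), (0 : Fin m → ℝ)) * u t r
                  + fderiv ℝ (fun p => fderiv ℝ (α ν) p ((0 : Fin (m + k) → ℝ), Pi.single i (1 : ℝ)))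
                    (q t, u t) ((0 : Fin (m + k) → ℝ), Pi.single r (1 : ℝ))
                    * deriv (fun τ => u τ r) t))
              - fderiv ℝ (α ν) (q t, u t) (Pi.single (Fin.castAdd k i) (1 : ℝ), (0 : Fin m → ℝ))
              + ∑ σ : Fin k,
                  (fderiv ℝ (fun p => fderiv ℝ (α ν) p ((0 : Fin (m + k) → ℝ), Pi.single i (1 : ℝ)))
                      (q t, u t) (Pi.single (Fin.natAdd m σ) (1 : ℝ), (0 : Fin m → ℝ))
                      * α σ (q t, u t)
                    - fderiv ℝ (α σ) (q t, u t) ((0 : Fin (m + k) → ℝ), Pi.single i (1 : ℝ))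
                      * fderiv ℝ (α ν) (q t, u t)
                          (Pi.single (Fin.natAdd m σ) (1 : ℝ), (0 : Fin m → ℝ)))))
    =
    -- projected Newton form
    deriv (fun τ =>
        fderiv ℝ T (q τ, Fin.append (u τ) (fun ν' => α ν' (q τ, u τ)))
          ((0 : Fin (m + k) → ℝ), Pi.single (Fin.castAdd k i) (1 : ℝ))) t
      - fderiv ℝ T (q t, Fin.append (u t) (fun ν' => α ν' (q t, u t)))
          (Pi.single (Fin.castAdd k i) (1 : ℝ), (0 : Fin (m + k) → ℝ))
      + ∑ ν : Fin k,
          fderiv ℝ (α ν) (q t, u t) ((0 : Fin (m + k) → ℝ), Pi.single i (1 : ℝ))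
            * (deriv (fun τ =>
                  fderiv ℝ T (q τ, Fin.append (u τ) (fun ν' => α ν' (q τ, u τ)))
                    ((0 : Fin (m + k) → ℝ), Pi.single (Fin.natAdd m ν) (1 : ℝ))) t
                - fderiv ℝ T (q t, Fin.append (u t) (fun ν' => α ν' (q t, u t)))
                    (Pi.single (Fin.natAdd m ν) (1 : ℝ), (0 : Fin (m + k) → ℝ))) := by
  classical
  -- basic regularity
  have hT1 : ContDiff ℝ 1 T := by rw [hT]; exact T_contDiff g hg
  have hqd : Differentiable ℝ q := hq.differentiable two_ne_zero
  have hud : Differentiable ℝ u := hu.differentiable one_ne_zero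
  have hpd : Differentiable ℝ (fun τ => (q τ, u τ)) := hqd.prodMk hud
  have hαd : ∀ ν, Differentiable ℝ (α ν) := fun ν => (hα ν).differentiable two_ne_zero
  have hcd : Differentiable ℝ
      (fun τ => (q τ, Fin.append (u τ) (fun ν' => α ν' (q τ, u τ)))) := by
    refine hqd.prodMk (differentiable_pi.mpr fun j => ?_)
    induction j using Fin.addCases with
    | left r =>
      have h : (fun τ => Fin.append (u τ) (fun ν' => α ν' (q τ, u τ)) (Fin.castAdd k r))
          = fun τ => u τ r := by funext τ; rw [Fin.append_left]
      rw [h]; exact differentiable_pi.mp hud r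
    | right σ =>
      have h : (fun τ => Fin.append (u τ) (fun ν' => α ν' (q τ, u τ)) (Fin.natAdd m σ))
          = fun τ => α σ (q τ, u τ) := by funext τ; rw [Fin.append_right]
      rw [h]; exact (hαd σ).comp hpd
  -- velocity of the curve
  have hq' : HasDerivAt q (Fin.append (u t) (fun σ => α σ (q t, u t))) t := by
    rw [hasDerivAt_pi]
    intro j
    induction j using Fin.addCases with
    | left r =>
      rw [Fin.append_left, ← hconstr1 t r]
      exact ((differentiable_pi.mp hqd (Fin.castAdd k r)) t).hasDerivAt
    | right σ =>
      rw [Fin.append_right, ← hconstr2 t σ]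
      exact ((differentiable_pi.mp hqd (Fin.natAdd m σ)) t).hasDerivAt
  have hu' : HasDerivAt u (fun r => deriv (fun τ => u τ r) t) t := by
    rw [hasDerivAt_pi]
    intro r
    exact ((differentiable_pi.mp hud r) t).hasDerivAt
  have hp' : HasDerivAt (fun τ => (q τ, u τ))
      ((Fin.append (u t) (fun σ => α σ (q t, u t)), fun r => deriv (fun τ => u τ r) t)) t :=
    hq'.prodMk hu'
  -- the mixed second derivative functions A ν
  have hA1 : ∀ ν : Fin k, ContDiff ℝ 1 (fun p : (Fin (m+k) → ℝ) × (Fin m → ℝ) =>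
      fderiv ℝ (α ν) p ((0 : Fin (m+k) → ℝ), Pi.single i (1:ℝ))) := fun ν =>
    ((hα ν).fderiv_right (by norm_num)).clm_apply contDiff_const
  have hAhas : ∀ ν : Fin k, HasDerivAt
      (fun τ => fderiv ℝ (α ν) (q τ, u τ) ((0 : Fin (m+k) → ℝ), Pi.single i (1:ℝ)))
      (fderiv ℝ (fun p => fderiv ℝ (α ν) p ((0 : Fin (m+k) → ℝ), Pi.single i (1:ℝ)))
        (q t, u t)
        ((Fin.append (u t) (fun σ => α σ (q t, u t)), fun r => deriv (fun τ => u τ r) t))) t := by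
    intro ν
    have h1 := ((((hA1 ν).differentiable one_ne_zero) (q t, u t)).hasFDerivAt).comp_hasDerivAt t hp'
    exact h1
  -- directional derivatives of T in velocity directions
  have hfd : ∀ (p : (Fin (m+k) → ℝ) × (Fin (m+k) → ℝ)) (e : Fin (m+k) → ℝ),
      fderiv ℝ T p ((0 : Fin (m+k) → ℝ), e) = Fe g e p := by
    intro p e
    rw [hT]
    exact fderiv_T_dir g hg p e
  have hFeD : ∀ e : Fin (m+k) → ℝ, DifferentiableAt ℝ
      (fun τ => Fe g e (q τ, Fin.append (u τ) (fun ν' => α ν' (q τ, u τ)))) t := fun e =>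
    (((Fe_contDiff g hg e).differentiable one_ne_zero) _).comp t (hcd t)
  -- chain rule for Tstar
  have hTsfd : ∀ (p h : (Fin (m+k) → ℝ) × (Fin m → ℝ)),
      fderiv ℝ Tstar p h
        = fderiv ℝ T (p.1, Fin.append p.2 (fun ν => α ν p))
            (h.1, Fin.append h.2 (fun σ => fderiv ℝ (α σ) p h)) := by
    intro p h
    rw [hTstar]
    exact fderiv_Tstar_eq α hT1 hα p h
  -- expansion of ∂Tstar/∂u_i
  have hTs_ui : ∀ (qq : Fin (m+k) → ℝ) (uu : Fin m → ℝ),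
      fderiv ℝ Tstar (qq, uu) ((0 : Fin (m+k) → ℝ), Pi.single i (1:ℝ))
        = Fe g (Pi.single (Fin.castAdd k i) 1) (qq, Fin.append uu (fun ν' => α ν' (qq, uu)))
          + ∑ σ : Fin k,
              fderiv ℝ (α σ) (qq, uu) ((0 : Fin (m+k) → ℝ), Pi.single i (1:ℝ))
                * Fe g (Pi.single (Fin.natAdd m σ) 1)
                    (qq, Fin.append uu (fun ν' => α ν' (qq, uu))) := by
    intro qq uu
    rw [hTsfd (qq, uu) ((0 : Fin (m+k) → ℝ), Pi.single i (1:ℝ))]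
    dsimp only
    rw [dir_expand (fderiv ℝ T (qq, Fin.append uu (fun ν => α ν (qq, uu))))
      (0 : Fin (m+k) → ℝ) (Pi.single i (1:ℝ))
      (fun σ => fderiv ℝ (α σ) (qq, uu) ((0 : Fin (m+k) → ℝ), Pi.single i (1:ℝ))),
      append_single i]
    simp only [hfd]
  -- expansion of ∂Tstar/∂q_l
  have hTs_q : ∀ (qq : Fin (m+k) → ℝ) (uu : Fin m → ℝ) (l : Fin (m+k)),
      fderiv ℝ Tstar (qq, uu) (Pi.single l (1:ℝ), (0 : Fin m → ℝ))
        = fderiv ℝ T (qq, Fin.append uu (fun ν' => α ν' (qq, uu)))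
            (Pi.single l (1:ℝ), (0 : Fin (m+k) → ℝ))
          + ∑ σ : Fin k,
              fderiv ℝ (α σ) (qq, uu) (Pi.single l (1:ℝ), (0 : Fin m → ℝ))
                * Fe g (Pi.single (Fin.natAdd m σ) 1)
                    (qq, Fin.append uu (fun ν' => α ν' (qq, uu))) := by
    intro qq uu l
    rw [hTsfd (qq, uu) (Pi.single l (1:ℝ), (0 : Fin m → ℝ))]
    dsimp only
    rw [dir_expand (fderiv ℝ T (qq, Fin.append uu (fun ν => α ν (qq, uu))))
      (Pi.single l (1:ℝ)) (0 : Fin m → ℝ)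
      (fun σ => fderiv ℝ (α σ) (qq, uu) (Pi.single l (1:ℝ), (0 : Fin m → ℝ))),
      append_zero_zero]
    simp only [hfd]
  simp only [hTs_ui, hTs_q, hfd]
  have hD : deriv (fun τ =>
        Fe g (Pi.single (Fin.castAdd k i) 1) (q τ, Fin.append (u τ) fun ν' => α ν' (q τ, u τ))
          + ∑ σ : Fin k,
              fderiv ℝ (α σ) (q τ, u τ) ((0 : Fin (m+k) → ℝ), Pi.single i (1:ℝ))
                * Fe g (Pi.single (Fin.natAdd m σ) 1)
                    (q τ, Fin.append (u τ) fun ν' => α ν' (q τ, u τ))) t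
      = deriv (fun τ => Fe g (Pi.single (Fin.castAdd k i) 1)
            (q τ, Fin.append (u τ) fun ν' => α ν' (q τ, u τ))) t
        + ∑ σ : Fin k,
            (deriv (fun τ =>
                fderiv ℝ (α σ) (q τ, u τ) ((0 : Fin (m+k) → ℝ), Pi.single i (1:ℝ))) t
              * Fe g (Pi.single (Fin.natAdd m σ) 1)
                  (q t, Fin.append (u t) fun ν' => α ν' (q t, u t))
            + fderiv ℝ (α σ) (q t, u t) ((0 : Fin (m+k) → ℝ), Pi.single i (1:ℝ))
              * deriv (fun τ => Fe g (Pi.single (Fin.natAdd m σ) 1)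
                  (q τ, Fin.append (u τ) fun ν' => α ν' (q τ, u τ))) t) := by
    have hmd : ∀ σ : Fin k, DifferentiableAt ℝ (fun τ =>
        fderiv ℝ (α σ) (q τ, u τ) ((0 : Fin (m+k) → ℝ), Pi.single i (1:ℝ))
          * Fe g (Pi.single (Fin.natAdd m σ) 1)
              (q τ, Fin.append (u τ) fun ν' => α ν' (q τ, u τ))) t :=
      fun σ => (hAhas σ).differentiableAt.mul (hFeD _)
    rw [deriv_fun_add (hFeD _)
      (DifferentiableAt.fun_sum fun σ _ => hmd σ)]
    congr 1
    rw [deriv_fun_sum fun σ _ => hmd σ]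
    exact Finset.sum_congr rfl fun σ _ =>
      deriv_fun_mul (hAhas σ).differentiableAt (hFeD _)
  rw [hD]
  have haD : ∀ σ : Fin k,
      deriv (fun τ => fderiv ℝ (α σ) (q τ, u τ) ((0 : Fin (m+k) → ℝ), Pi.single i (1:ℝ))) t
        = fderiv ℝ (fun p => fderiv ℝ (α σ) p ((0 : Fin (m+k) → ℝ), Pi.single i (1:ℝ)))
            (q t, u t)
            ((Fin.append (u t) fun σ => α σ (q t, u t)), fun r => deriv (fun τ => u τ r) t) :=
    fun σ => (hAhas σ).deriv
  have hW : ∀ ν : Fin k,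
      fderiv ℝ (fun p => fderiv ℝ (α ν) p ((0 : Fin (m+k) → ℝ), Pi.single i (1:ℝ)))
          (q t, u t)
          ((Fin.append (u t) fun σ => α σ (q t, u t)), fun r => deriv (fun τ => u τ r) t)
        = ((∑ r : Fin m,
              (fderiv ℝ (fun p => fderiv ℝ (α ν) p ((0 : Fin (m+k) → ℝ), Pi.single i (1:ℝ)))
                  (q t, u t) (Pi.single (Fin.castAdd k r) (1:ℝ), (0 : Fin m → ℝ)) * u t r
                + fderiv ℝ (fun p => fderiv ℝ (α ν) p ((0 : Fin (m+k) → ℝ), Pi.single i (1:ℝ)))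
                  (q t, u t) ((0 : Fin (m+k) → ℝ), Pi.single r (1:ℝ))
                  * deriv (fun τ => u τ r) t))
            - fderiv ℝ (α ν) (q t, u t) (Pi.single (Fin.castAdd k i) (1:ℝ), (0 : Fin m → ℝ))
            + ∑ σ : Fin k,
                (fderiv ℝ (fun p => fderiv ℝ (α ν) p ((0 : Fin (m+k) → ℝ), Pi.single i (1:ℝ)))
                    (q t, u t) (Pi.single (Fin.natAdd m σ) (1:ℝ), (0 : Fin m → ℝ))
                    * α σ (q t, u t)
                  - fderiv ℝ (α σ) (q t, u t) ((0 : Fin (m+k) → ℝ), Pi.single i (1:ℝ))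
                    * fderiv ℝ (α ν) (q t, u t)
                        (Pi.single (Fin.natAdd m σ) (1:ℝ), (0 : Fin m → ℝ))))
          + fderiv ℝ (α ν) (q t, u t) (Pi.single (Fin.castAdd k i) (1:ℝ), (0 : Fin m → ℝ))
          + ∑ σ : Fin k,
              fderiv ℝ (α σ) (q t, u t) ((0 : Fin (m+k) → ℝ), Pi.single i (1:ℝ))
                * fderiv ℝ (α ν) (q t, u t)
                    (Pi.single (Fin.natAdd m σ) (1:ℝ), (0 : Fin m → ℝ)) := by
    intro ν
    rw [clm_expand
      (fderiv ℝ (fun p => fderiv ℝ (α ν) p ((0 : Fin (m+k) → ℝ), Pi.single i (1:ℝ))) (q t, u t))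
      (Fin.append (u t) fun σ => α σ (q t, u t)) (fun r => deriv (fun τ => u τ r) t)]
    simp only [Fin.append_left, Fin.append_right]
    exact alg1 _ _ _ _ _ _ _ _ _
  simp only [haD, hW]
  exact alg2 _ _ _ _ _ _ _ _ _
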